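/- In a free group, the centralizer of any nontrivial element is an infinite cyclic subgroup. -/

import Mathlib

open FreeGroup List

lemma cons_eq_append_singleton {β : Type*} (a : β) :
    ∀ (L : List β), a :: L = L ++ [a] → L = List.replicate L.length a := by
  intro L
  induction L with
  | nil => intro _; rfl
  | cons b t ih =>
    intro h
    simp only [List.cons_append, List.cons.injEq] at h
    obtain ⟨hab, h2⟩ := h
    subst hab
    have := ih h2
    simp [List.replicate_succ, ← this]

lemma reduce_tail {α : Type*} [DecidableEq α] {hd : α × Bool} {tl : List (α × Bool)}
    (h : FreeGroup.reduce (hd :: tl) = hd :: tl) : FreeGroup.reduce tl = tl := by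
  rw [FreeGroup.reduce.cons] at h
  rcases hre : FreeGroup.reduce tl with _ | ⟨hd', tl'⟩
  · rw [hre] at h
    simp at h
    subst h; exact hre
  · rw [hre] at h
    by_cases hc : hd.1 = hd'.1 ∧ hd.2 = !hd'.2
    · simp only [hc, and_self, if_true] at h
      have hlen : tl'.length = tl.length + 1 := by
        have := congrArg List.length h; simpa using this
      have h2 : (FreeGroup.reduce tl).length ≤ tl.length :=
        FreeGroup.Red.length_le (FreeGroup.reduce.red)
      rw [hre] at h2
      simp [hlen] at h2
    · simp only [hc, if_false] at h
      simp only [List.cons.injEq, true_and] at h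
      rw [← h]

lemma of_eq_mk {α : Type*} (x : α) : FreeGroup.of x = FreeGroup.mk [(x, true)] := rfl

lemma pow_of_comm_gen {α : Type*} [DecidableEq α] (x : α) :
    ∀ (N : ℕ) (z : FreeGroup α), z.toWord.length ≤ N →
      z * FreeGroup.of x = FreeGroup.of x * z → ∃ n : ℤ, z = FreeGroup.of x ^ n := by
  intro N
  induction N with
  | zero =>
    intro z hlen _
    refine ⟨0, ?_⟩
    simp only [Nat.le_zero, List.length_eq_zero_iff] at hlen
    rw [FreeGroup.toWord_eq_nil_iff] at hlen
    simp [hlen]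
  | succ N ih =>
    intro z hlen hcomm
    have hL : FreeGroup.reduce z.toWord = z.toWord := FreeGroup.reduce_toWord z
    have hzmk : FreeGroup.mk z.toWord = z := FreeGroup.mk_toWord
    rcases hcase : z.toWord with _ | ⟨hd, tl⟩
    · refine ⟨0, ?_⟩
      rw [FreeGroup.toWord_eq_nil_iff] at hcase
      simp [hcase]
    · rw [hcase] at hL hzmk
      -- the reduced word of (of x * z)
      have hxzword : (FreeGroup.of x * z).toWord
          = FreeGroup.reduce ((x, true) :: hd :: tl) := by
        rw [← hzmk, of_eq_mk, FreeGroup.mul_mk, FreeGroup.toWord_mk]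
        rfl
      by_cases hcancel : hd = (x, false)
      · -- Case A: head cancels
        have hred : (FreeGroup.of x * z).toWord = tl := by
          rw [hxzword, FreeGroup.reduce.cons, hL, hcancel]
          simp
        have hmem : FreeGroup.of x * z = FreeGroup.mk tl := by
          rw [← FreeGroup.mk_toWord (x := FreeGroup.of x * z), hred]
        have hcomm' : (FreeGroup.of x * z) * FreeGroup.of x
            = FreeGroup.of x * (FreeGroup.of x * z) := by
          rw [mul_assoc, hcomm]
        have hlen' : (FreeGroup.of x * z).toWord.length ≤ N := by
          rw [hred]
          have : (hd :: tl).length ≤ N + 1 := hcase ▸ hlen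
          simpa using this
        obtain ⟨n, hn⟩ := ih (FreeGroup.of x * z) hlen' hcomm'
        refine ⟨n - 1, ?_⟩
        have : z = (FreeGroup.of x)⁻¹ * (FreeGroup.of x * z) := by group
        rw [this, hn]
        rw [zpow_sub_one]
        group
      · -- Case B: no cancellation on the left
        have hnc : ¬((x, true).1 = hd.1 ∧ (x, true).2 = !hd.2) := by
          intro ⟨h1, h2⟩
          apply hcancel
          have : hd.2 = false := by
            cases hh : hd.2 <;> simp [hh] at h2 ⊢
          exact Prod.ext (h1.symm) this
        have hredB : (FreeGroup.of x * z).toWord = (x, true) :: hd :: tl := by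
          rw [hxzword, FreeGroup.reduce.cons, hL]
          simp only [hnc, if_false]
        -- now compute the reduced word of z * of x
        have hinvword : (z⁻¹).toWord = FreeGroup.invRev (hd :: tl) := by
          rw [FreeGroup.toWord_inv, hcase]
        have hw' : (FreeGroup.of x)⁻¹ * z⁻¹
            = FreeGroup.mk ((x, false) :: FreeGroup.invRev (hd :: tl)) := by
          rw [← FreeGroup.mk_toWord (x := z⁻¹), hinvword, of_eq_mk, FreeGroup.inv_mk,
            FreeGroup.mul_mk]
          rfl
        have hinvred : FreeGroup.reduce (FreeGroup.invRev (hd :: tl))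
            = FreeGroup.invRev (hd :: tl) := by
          rw [FreeGroup.reduce_invRev, hL]
        rcases hM : FreeGroup.invRev (hd :: tl) with _ | ⟨m0, ms⟩
        · exfalso
          have := congrArg List.length hM
          simp [FreeGroup.invRev_length] at this
        · rw [hM] at hinvred hw'
          have hw'word : ((FreeGroup.of x)⁻¹ * z⁻¹).toWord
              = FreeGroup.reduce ((x, false) :: m0 :: ms) := by
            rw [hw', FreeGroup.toWord_mk]
          by_cases hc2 : (x, false).1 = m0.1 ∧ (x, false).2 = !m0.2
          · -- cancellation at the end: contradiction via lengths
            exfalso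
            have hw'red : ((FreeGroup.of x)⁻¹ * z⁻¹).toWord = ms := by
              rw [hw'word, FreeGroup.reduce.cons, hinvred]
              exact if_pos hc2
            have h1 : (z * FreeGroup.of x).toWord.length = ms.length := by
              have : z * FreeGroup.of x = ((FreeGroup.of x)⁻¹ * z⁻¹)⁻¹ := by group
              rw [this, FreeGroup.toWord_inv, FreeGroup.invRev_length, hw'red]
            have h2 : (z * FreeGroup.of x).toWord.length = tl.length + 2 := by
              rw [hcomm, hredB]; simp
            have h3 : tl.length = ms.length := by
              have := congrArg List.length hM
              simpa [FreeGroup.invRev_length] using this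
            omega
          · -- no cancellation: z * of x has word L ++ [(x, true)]
            have hw'red : ((FreeGroup.of x)⁻¹ * z⁻¹).toWord = (x, false) :: m0 :: ms := by
              rw [hw'word, FreeGroup.reduce.cons, hinvred]
              simp only [hc2, if_false]
            have hfin : (z * FreeGroup.of x).toWord
                = (hd :: tl) ++ [(x, true)] := by
              have heq : z * FreeGroup.of x = ((FreeGroup.of x)⁻¹ * z⁻¹)⁻¹ := by group
              rw [heq, FreeGroup.toWord_inv, hw'red]
              have hstep : FreeGroup.invRev ((x, false) :: m0 :: ms)
                  = FreeGroup.invRev (m0 :: ms) ++ [(x, true)] := by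
                simp [FreeGroup.invRev]
              rw [hstep, ← hM, FreeGroup.invRev_invRev]
            have hkey : (hd :: tl) ++ [(x, true)] = (x, true) :: hd :: tl := by
              rw [← hfin, hcomm, hredB]
            have hrep := cons_eq_append_singleton (x, true) (hd :: tl) hkey.symm
            refine ⟨(hd :: tl).length, ?_⟩
            have : (FreeGroup.of x ^ ((hd :: tl).length : ℤ)).toWord
                = List.replicate (hd :: tl).length (x, true) := by
              rw [zpow_natCast, FreeGroup.toWord_of_pow]
            apply FreeGroup.toWord_injective
            rw [this, hcase]
            exact hrep

lemma eq_of_pow_eq_pow {α : Type*} {x y : α} {m n : ℤ} (hm : m ≠ 0)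
    (h : FreeGroup.of x ^ m = FreeGroup.of y ^ n) : x = y := by
  by_contra hxy
  classical
  set f : α → Multiplicative ℤ := fun t => if t = x then Multiplicative.ofAdd (1 : ℤ) else 1
  have := congrArg (FreeGroup.lift f) h
  rw [map_zpow, map_zpow, FreeGroup.lift_apply_of, FreeGroup.lift_apply_of] at this
  simp only [f, if_pos rfl] at this
  rw [if_neg (fun hh : y = x => hxy hh.symm), one_zpow] at this
  have h2 := congrArg Multiplicative.toAdd this
  simp at h2
  exact hm h2

lemma subsingleton_gen {α : Type*} [DecidableEq α] {z : FreeGroup α} (hz : z ≠ 1)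
    (hcent : ∀ w : FreeGroup α, w * z = z * w) (x y : α) : x = y := by
  have hx : z * FreeGroup.of x = FreeGroup.of x * z := (hcent (FreeGroup.of x)).symm
  have hy : z * FreeGroup.of y = FreeGroup.of y * z := (hcent (FreeGroup.of y)).symm
  obtain ⟨m, hm⟩ := pow_of_comm_gen x z.toWord.length z le_rfl hx
  obtain ⟨n, hn⟩ := pow_of_comm_gen y z.toWord.length z le_rfl hy
  have hm0 : m ≠ 0 := by
    rintro rfl
    simp at hm
    exact hz hm
  exact eq_of_pow_eq_pow hm0 (hm ▸ hn)

lemma free_group_cyclic_of_center {α : Type*} [DecidableEq α] {z : FreeGroup α} (hz : z ≠ 1)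
    (hcent : ∀ w : FreeGroup α, w * z = z * w) :
    ∃ h : FreeGroup α, ∀ w : FreeGroup α, ∃ n : ℤ, w = h ^ n := by
  have hne : z.toWord ≠ [] := fun h => hz (FreeGroup.toWord_eq_nil_iff.mp h)
  rcases hw : z.toWord with _ | ⟨hd, tl⟩
  · exact absurd hw hne
  refine ⟨FreeGroup.of hd.1, fun w => ?_⟩
  have hsub := subsingleton_gen hz hcent
  have hcomm : w * FreeGroup.of hd.1 = FreeGroup.of hd.1 * w := by
    induction w using FreeGroup.induction_on with
    | C1 => simp
    | of t =>
      have ht : FreeGroup.of t = FreeGroup.of hd.1 := by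
        rw [show t = hd.1 from hsub t hd.1]
      rw [ht]
    | inv_of t _ =>
      have ht : FreeGroup.of t = FreeGroup.of hd.1 := by
        rw [show t = hd.1 from hsub t hd.1]
      rw [ht]
      exact ((Commute.refl (FreeGroup.of hd.1)).inv_left).eq
    | mul a b ha hb => rw [mul_assoc, hb, ← mul_assoc, ha, mul_assoc]
  exact pow_of_comm_gen hd.1 w.toWord.length w le_rfl hcomm

lemma isFreeGroup_cyclic_of_center {G : Type*} [Group G] [IsFreeGroup G] {z : G} (hz : z ≠ 1)
    (hcent : ∀ w : G, w * z = z * w) :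
    ∃ h : G, ∀ w : G, ∃ n : ℤ, w = h ^ n := by
  classical
  let e : G ≃* FreeGroup (IsFreeGroup.Generators G) := IsFreeGroup.toFreeGroup G
  have hz' : e z ≠ 1 := fun h => hz (by simpa using e.injective (h.trans (_root_.map_one e).symm))
  have hcent' : ∀ w' : FreeGroup (IsFreeGroup.Generators G), w' * e z = e z * w' := by
    intro w'
    have := hcent (e.symm w')
    have := congrArg e this
    simpa using this
  obtain ⟨h', hh'⟩ := free_group_cyclic_of_center hz' hcent'
  refine ⟨e.symm h', fun w => ?_⟩
  obtain ⟨n, hn⟩ := hh' (e w)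
  exact ⟨n, by simpa [map_zpow] using congrArg e.symm hn⟩

lemma isFreeGroup_infinite {G : Type*} [Group G] [IsFreeGroup G] {z : G} (hz : z ≠ 1) :
    Infinite G := by
  let e : G ≃* FreeGroup (IsFreeGroup.Generators G) := IsFreeGroup.toFreeGroup G
  rcases isEmpty_or_nonempty (IsFreeGroup.Generators G) with hempty | hne
  · exfalso
    apply hz
    have hz' : (e z).toWord = [] := by
      rcases hw : (e z).toWord with _ | ⟨hd, tl⟩
      · rfl
      · exact hempty.elim hd.1
    have : e z = 1 := FreeGroup.toWord_eq_nil_iff.mp hz'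
    simpa using e.injective (this.trans (_root_.map_one e).symm)
  · exact Infinite.of_injective e.symm e.symm.injective

/-- In a free group, the centralizer of any nontrivial element is an infinite cyclic
subgroup: it equals the set of integer powers of some element, and it is infinite. -/
theorem stmt1 {α : Type*} (g : FreeGroup α) (hg : g ≠ 1) :
    ∃ h : FreeGroup α,
      Subgroup.centralizer {g} = Subgroup.zpowers h ∧
      (Subgroup.centralizer {g} : Set (FreeGroup α)).Infinite := by
  classical
  set C := Subgroup.centralizer {g} with hC
  have hgmem : g ∈ C := by
    rw [hC, Subgroup.mem_centralizer_iff]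
    rintro h rfl
    rfl
  haveI : IsFreeGroup C := inferInstance
  set z : C := ⟨g, hgmem⟩ with hzdef
  have hz : z ≠ 1 := by
    intro h
    exact hg (congrArg Subtype.val h)
  have hcent : ∀ w : C, w * z = z * w := by
    rintro ⟨w, hw⟩
    rw [hC, Subgroup.mem_centralizer_iff] at hw
    have := hw g rfl
    exact Subtype.ext this.symm
  obtain ⟨h, hh⟩ := isFreeGroup_cyclic_of_center hz hcent
  refine ⟨(h : FreeGroup α), ?_, ?_⟩
  · apply _root_.le_antisymm
    · intro c hc
      obtain ⟨n, hn⟩ := hh ⟨c, hc⟩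
      exact ⟨n, by simpa using (congrArg Subtype.val hn).symm⟩
    · rw [Subgroup.zpowers_le]
      exact h.2
  · rw [← Set.infinite_coe_iff]
    have : Infinite C := isFreeGroup_infinite hz
    exact this
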